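/- Let p ≡ 1 (mod 6) be a prime and a ∈ F_p*. Then a is a quadratic residue modulo p if and only if N_{p,a} ≡ 0 (mod 6), where N_{p,a} is the number of projective points on y² = x³ + a³ over F_p. -/

import Mathlib

open WeierstrassCurve WeierstrassCurve.Affine

/-- The Bachet curve as a Weierstrass curve. -/
def bachetE (p : ℕ) (a : ZMod p) : WeierstrassCurve.Affine (ZMod p) :=
  ⟨0, 0, 0, 0, a ^ 3⟩

section aux
variable {p : ℕ} [Fact p.Prime]

lemma bachet_equation_iff (a x y : ZMod p) :
    (bachetE p a).Equation x y ↔ y ^ 2 = x ^ 3 + a ^ 3 := by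
  rw [WeierstrassCurve.Affine.equation_iff]
  simp [bachetE]

lemma bachet_Δ (a : ZMod p) : (bachetE p a).Δ = -432 * a ^ 6 := by
  simp only [WeierstrassCurve.Δ, WeierstrassCurve.b₂, WeierstrassCurve.b₄, WeierstrassCurve.b₆,
    WeierstrassCurve.b₈, bachetE]
  ring

lemma bachet_nonsingular {a : ZMod p} (h2 : (2 : ZMod p) ≠ 0) (h3 : (3 : ZMod p) ≠ 0)
    (ha : a ≠ 0) {x y : ZMod p} (h : y ^ 2 = x ^ 3 + a ^ 3) :
    (bachetE p a).Nonsingular x y := by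
  refine (WeierstrassCurve.Affine.equation_iff_nonsingular_of_Δ_ne_zero (W := bachetE p a) ?_).mp ((bachet_equation_iff a x y).mpr h)
  rw [bachet_Δ]
  have h432 : (-432 : ZMod p) ≠ 0 := by
    have : (-432 : ZMod p) = -(2^4 * 3^3) := by norm_num
    rw [this, neg_ne_zero]
    exact mul_ne_zero (pow_ne_zero _ h2) (pow_ne_zero _ h3)
  exact mul_ne_zero h432 (pow_ne_zero _ ha)

end aux

section aux2
variable {p : ℕ} [Fact p.Prime]

lemma bachet_negY (a x y : ZMod p) : (bachetE p a).negY x y = -y := by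
  simp [WeierstrassCurve.Affine.negY, bachetE]

/-- x-coordinate of a point (0 for the point at infinity). -/
def ptX {R : Type*} [CommRing R] {W : WeierstrassCurve.Affine R} : W.Point → R
  | .zero => 0
  | @WeierstrassCurve.Affine.Point.some _ _ _ x _ _ => x

/-- y-coordinate of a point (0 for the point at infinity). -/
def ptY {R : Type*} [CommRing R] {W : WeierstrassCurve.Affine R} : W.Point → R
  | .zero => 0
  | @WeierstrassCurve.Affine.Point.some _ _ _ _ y _ => y

lemma point_some_eq_some {R : Type*} [CommRing R] {W : WeierstrassCurve.Affine R}
    {x₁ y₁ x₂ y₂ : R} (hx : x₁ = x₂) (hy : y₁ = y₂)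
    (h₁ : W.Nonsingular x₁ y₁) (h₂ : W.Nonsingular x₂ y₂) :
    WeierstrassCurve.Affine.Point.some _ _ h₁ = .some _ _ h₂ := by
  subst hx; subst hy; rfl

/-- Points of the Bachet curve are in bijection with affine solutions plus infinity. -/
def bachetEquiv (p : ℕ) [Fact p.Prime] (a : ZMod p) (h2 : (2 : ZMod p) ≠ 0)
    (h3 : (3 : ZMod p) ≠ 0) (ha : a ≠ 0) :
    (bachetE p a).Point ≃ Option {P : ZMod p × ZMod p // P.2 ^ 2 = P.1 ^ 3 + a ^ 3} where
  toFun P := match P with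
    | .zero => none
    | @WeierstrassCurve.Affine.Point.some _ _ _ x y h =>
        some ⟨(x, y), (bachet_equation_iff a x y).mp h.1⟩
  invFun o := match o with
    | none => .zero
    | some ⟨(_, _), h⟩ => .some _ _ (bachet_nonsingular h2 h3 ha h)
  left_inv P := by cases P <;> rfl
  right_inv o := by rcases o with - | ⟨⟨x, y⟩, h⟩ <;> rfl

end aux2

section aux3
variable {p : ℕ} [Fact p.Prime]

lemma bachet_char_ne (hp : p % 6 = 1) :
    (2 : ZMod p) ≠ 0 ∧ (3 : ZMod p) ≠ 0 := by
  have hP : p.Prime := Fact.out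
  constructor
  · intro h
    have : (p : ℕ) ∣ 2 := by
      have : ((2 : ℕ) : ZMod p) = 0 := by exact_mod_cast h
      exact (ZMod.natCast_eq_zero_iff 2 p).mp this
    have := (Nat.prime_dvd_prime_iff_eq hP Nat.prime_two).mp this
    omega
  · intro h
    have : (p : ℕ) ∣ 3 := by
      have : ((3 : ℕ) : ZMod p) = 0 := by exact_mod_cast h
      exact (ZMod.natCast_eq_zero_iff 3 p).mp this
    have := (Nat.prime_dvd_prime_iff_eq hP Nat.prime_three).mp this
    omega

lemma isSquare_of_sq_eq_cube {a r : ZMod p} (ha : a ≠ 0) (h : r ^ 2 = a ^ 3) :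
    IsSquare a := by
  refine ⟨r / a, ?_⟩
  field_simp
  linear_combination -h

lemma exists_sq_eq_neg_three (hp : p % 6 = 1) : ∃ t : ZMod p, t ^ 2 = -3 := by
  have hP : p.Prime := Fact.out
  haveI : Fact (Nat.Prime 3) := ⟨Nat.prime_three⟩
  have hcard : Fintype.card (ZMod p)ˣ = p - 1 := by
    rw [ZMod.card_units_eq_totient, Nat.totient_prime hP]
  have hdvd : 3 ∣ Fintype.card (ZMod p)ˣ := by
    rw [hcard]
    have := hP.two_le
    omega
  obtain ⟨g, hg⟩ := exists_prime_orderOf_dvd_card 3 hdvd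
  have hg3 : (g : ZMod p) ^ 3 = 1 := by
    have := pow_orderOf_eq_one g
    rw [hg] at this
    calc (g : ZMod p) ^ 3 = ((g ^ 3 : (ZMod p)ˣ) : ZMod p) := by push_cast; ring
      _ = 1 := by rw [this]; rfl
  have hg1 : (g : ZMod p) ≠ 1 := by
    intro h
    have : g = 1 := Units.ext h
    rw [this, orderOf_one] at hg
    omega
  have hsum : (g : ZMod p) ^ 2 + g + 1 = 0 := by
    have hfac : ((g : ZMod p) - 1) * ((g : ZMod p) ^ 2 + g + 1) = 0 := by
      linear_combination hg3
    rcases mul_eq_zero.mp hfac with h | h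
    · exact absurd (sub_eq_zero.mp h) hg1
    · exact h
  exact ⟨2 * g + 1, by linear_combination 4 * hsum⟩

end aux3

section aux4
variable {p : ℕ} [Fact p.Prime]

lemma bachet_exists_order_two {a : ZMod p} (h2 : (2 : ZMod p) ≠ 0) (h3 : (3 : ZMod p) ≠ 0)
    (ha : a ≠ 0) : ∃ P : (bachetE p a).Point, addOrderOf P = 2 := by
  have heq : (0 : ZMod p) ^ 2 = (-a) ^ 3 + a ^ 3 := by ring
  haveI : Fact (Nat.Prime 2) := ⟨Nat.prime_two⟩
  refine ⟨.some _ _ (bachet_nonsingular h2 h3 ha heq), addOrderOf_eq_prime ?_ ?_⟩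
  · rw [two_nsmul]
    exact WeierstrassCurve.Affine.Point.add_self_of_Y_eq (by rw [bachet_negY]; ring)
  · intro h0
    exact WeierstrassCurve.Affine.Point.some_ne_zero _ h0

lemma bachet_exists_order_three {a : ZMod p} (h2 : (2 : ZMod p) ≠ 0) (h3 : (3 : ZMod p) ≠ 0)
    (ha : a ≠ 0) (hsq : IsSquare a) : ∃ P : (bachetE p a).Point, addOrderOf P = 3 := by
  obtain ⟨c, rfl⟩ := hsq
  have hc : c ≠ 0 := fun h => ha (by rw [h]; ring)
  have heq : (c ^ 3) ^ 2 = (0 : ZMod p) ^ 3 + (c * c) ^ 3 := by ring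
  have h := bachet_nonsingular h2 h3 ha heq
  have hy : (c ^ 3 : ZMod p) ≠ (bachetE p (c * c)).negY 0 (c ^ 3) := by
    rw [bachet_negY]
    intro hh
    have : (2 : ZMod p) * c ^ 3 = 0 := by linear_combination hh
    rcases mul_eq_zero.mp this with h' | h'
    · exact h2 h'
    · exact hc (pow_eq_zero_iff (by norm_num) |>.mp h')
  have hadd := WeierstrassCurve.Affine.Point.add_self_of_Y_ne (h₁ := h) hy
  have hslope : (bachetE p (c * c)).slope 0 0 (c ^ 3) (c ^ 3) = 0 := by
    rw [WeierstrassCurve.Affine.slope_of_Y_ne rfl hy]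
    simp [bachetE]
  have hX : (bachetE p (c * c)).addX 0 0 ((bachetE p (c * c)).slope 0 0 (c ^ 3) (c ^ 3)) = 0 := by
    rw [hslope]; simp [bachetE]
  have hY : (bachetE p (c * c)).addY 0 0 (c ^ 3)
      ((bachetE p (c * c)).slope 0 0 (c ^ 3) (c ^ 3)) = (bachetE p (c * c)).negY 0 (c ^ 3) := by
    rw [hslope]
    simp [WeierstrassCurve.Affine.addY, WeierstrassCurve.Affine.negAddY, bachetE,
      WeierstrassCurve.Affine.negY]
  have h2P : (WeierstrassCurve.Affine.Point.some _ _ h) + .some _ _ h = -(.some _ _ h) := by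
    rw [hadd, WeierstrassCurve.Affine.Point.neg_some]
    exact point_some_eq_some hX hY _ _
  haveI : Fact (Nat.Prime 3) := ⟨Nat.prime_three⟩
  refine ⟨.some _ _ h, addOrderOf_eq_prime ?_ ?_⟩
  · show ((2 + 1 : ℕ)) • (WeierstrassCurve.Affine.Point.some _ _ h) = 0
    rw [add_nsmul, one_nsmul, two_nsmul, h2P, neg_add_cancel]
  · intro h0
    exact WeierstrassCurve.Affine.Point.some_ne_zero _ h0

end aux4

section aux5
variable {p : ℕ} [Fact p.Prime]

lemma bachet_square_of_order_three {a : ZMod p} (hp : p % 6 = 1) (h2 : (2 : ZMod p) ≠ 0)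
    (h3 : (3 : ZMod p) ≠ 0) (ha : a ≠ 0) (P : (bachetE p a).Point)
    (hord : addOrderOf P = 3) : IsSquare a := by
  have h3P : (3 : ℕ) • P = 0 := by rw [← hord]; exact addOrderOf_nsmul_eq_zero P
  cases P with
  | zero =>
    rw [show (WeierstrassCurve.Affine.Point.zero : (bachetE p a).Point) = 0 from rfl,
      addOrderOf_zero] at hord
    omega
  | @some x y h =>
    let W := bachetE p a
    have hW : W = bachetE p a := rfl
    have heq : y ^ 2 = x ^ 3 + a ^ 3 := (bachet_equation_iff a x y).mp h.1
    have hy0 : y ≠ 0 := by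
      intro h0
      subst h0
      have h2P0 : (WeierstrassCurve.Affine.Point.some _ _ h) + .some _ _ h = 0 :=
        WeierstrassCurve.Affine.Point.add_self_of_Y_eq (by rw [bachet_negY]; ring)
      have hdvd : addOrderOf (WeierstrassCurve.Affine.Point.some _ _ h) ∣ 2 :=
        addOrderOf_dvd_iff_nsmul_eq_zero.mpr (by rw [two_nsmul]; exact h2P0)
      rw [hord] at hdvd
      norm_num at hdvd
    have hy : y ≠ W.negY x y := by
      rw [hW, bachet_negY]
      intro hh
      have : (2 : ZMod p) * y = 0 := by linear_combination hh
      rcases mul_eq_zero.mp this with h' | h'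
      · exact h2 h'
      · exact hy0 h'
    have hadd := WeierstrassCurve.Affine.Point.add_self_of_Y_ne (h₁ := h) hy
    have hsum : (WeierstrassCurve.Affine.Point.some _ _ h) + .some _ _ h + .some _ _ h = 0 := by
      rw [← h3P]
      show _ = ((2 + 1 : ℕ)) • (WeierstrassCurve.Affine.Point.some _ _ h)
      rw [add_nsmul, one_nsmul, two_nsmul]
    rw [hadd] at hsum
    have h2P := eq_neg_of_add_eq_zero_left hsum
    rw [WeierstrassCurve.Affine.Point.neg_some] at h2P
    have hXeq : W.addX x x (W.slope x x y y) = x := congrArg ptX h2P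
    have hs : W.slope x x y y = 3 * x ^ 2 / (2 * y) := by
      rw [WeierstrassCurve.Affine.slope_of_Y_ne rfl hy, hW, bachet_negY]
      simp [bachetE, sub_neg_eq_add]
      ring_nf
    have h2y : (2 : ZMod p) * y ≠ 0 := mul_ne_zero h2 hy0
    rw [hs] at hXeq
    simp only [WeierstrassCurve.Affine.addX, hW, bachetE] at hXeq
    field_simp at hXeq
    have key : x * (x ^ 3 + 4 * a ^ 3) = 0 := by
      have hk : (3 : ZMod p) * (x * (x ^ 3 + 4 * a ^ 3)) = 0 := by
        linear_combination -hXeq - 12 * x * heq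
      rcases mul_eq_zero.mp hk with h' | h'
      · exact absurd h' h3
      · exact h'
    rcases mul_eq_zero.mp key with hx0 | hx4
    · rw [hx0] at heq
      exact isSquare_of_sq_eq_cube (r := y) ha (by linear_combination heq)
    · obtain ⟨t, ht⟩ := exists_sq_eq_neg_three hp
      have ht0 : t ≠ 0 := by
        intro h0
        rw [h0] at ht
        apply h3
        linear_combination ht
      have hyt : (y / t) ^ 2 = a ^ 3 := by
        field_simp
        linear_combination heq + hx4 - a ^ 3 * ht
      exact isSquare_of_sq_eq_cube ha hyt

end aux5

/-- Number of projective points (affine solutions plus the point at infinity)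
on the Bachet curve `y² = x³ + a³` over `F_p`. -/
def bachetCount (p : ℕ) [Fact p.Prime] (a : ZMod p) : ℕ :=
  haveI : NeZero p := ⟨(Fact.out : p.Prime).ne_zero⟩
  (Finset.univ.filter (fun P : ZMod p × ZMod p => P.2 ^ 2 = P.1 ^ 3 + a ^ 3)).card + 1

theorem stmt_11 (p : ℕ) [Fact p.Prime] (hp : p % 6 = 1) (a : ZMod p) (ha : a ≠ 0) :
    IsSquare a ↔ bachetCount p a % 6 = 0 := by
  haveI : NeZero p := ⟨(Fact.out : p.Prime).ne_zero⟩
  obtain ⟨h2, h3⟩ := bachet_char_ne (p := p) hp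
  haveI : Fintype (bachetE p a).Point := Fintype.ofEquiv _ (bachetEquiv p a h2 h3 ha).symm
  have hcard : Fintype.card (bachetE p a).Point = bachetCount p a := by
    rw [Fintype.card_congr (bachetEquiv p a h2 h3 ha), Fintype.card_option, bachetCount]
    congr 1
    exact Fintype.card_subtype _
  constructor
  · intro hsq
    obtain ⟨P2, hP2⟩ := bachet_exists_order_two h2 h3 ha
    obtain ⟨P3, hP3⟩ := bachet_exists_order_three h2 h3 ha hsq
    have hd2 : 2 ∣ bachetCount p a := by
      rw [← hcard, ← hP2]; exact addOrderOf_dvd_card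
    have hd3 : 3 ∣ bachetCount p a := by
      rw [← hcard, ← hP3]; exact addOrderOf_dvd_card
    have hd6 : 6 ∣ bachetCount p a :=
      (show Nat.Coprime 2 3 by norm_num).mul_dvd_of_dvd_of_dvd hd2 hd3
    obtain ⟨k, hk⟩ := hd6
    omega
  · intro hmod
    have hd3 : 3 ∣ Fintype.card (bachetE p a).Point := by
      rw [hcard]
      exact dvd_trans ⟨2, rfl⟩ (Nat.dvd_of_mod_eq_zero hmod)
    obtain ⟨P, hP⟩ := exists_prime_addOrderOf_dvd_card 3 hd3
    exact bachet_square_of_order_three hp h2 h3 ha P hP
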